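/- Shared-key consistency of the proposed MP-NIKE scheme: let G be a group, g ∈ G an element whose order divides p*z*q, and let W be a finite nonempty index set with, for each i ∈ W, natural numbers y_i, k_i, public key e_i = p*y_i + z*q*k_i and private key d_i = g^{p*y_i}. Then for every i ∈ W, d_i^{∏_{j∈W, j≠i} e_j} = g^{p^{|W|} * ∏_{j∈W} y_j}. In particular the value is independent of i. -/

import Mathlib

theorem stmt_6 (G : Type*) [Group G] (g : G)
    (p z q : ℕ) (hp : 0 < p) (hz : 0 < z) (hq : 0 < q)
    (hg : g ^ (p * z * q) = 1)
    (ι : Type*) [DecidableEq ι] (W : Finset ι) (hW : W.Nonempty)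
    (y k : ι → ℕ) (e : ι → ℕ) (d : ι → G)
    (he : ∀ i ∈ W, e i = p * y i + z * q * k i)
    (hd : ∀ i ∈ W, d i = g ^ (p * y i)) :
    ∀ i ∈ W, (d i) ^ (∏ j ∈ W.erase i, e j) = g ^ (p ^ W.card * ∏ j ∈ W, y j) := by
  intro i hi
  have hord : orderOf g ∣ p * z * q := orderOf_dvd_of_pow_eq_one hg
  have key : ∀ s : Finset ι, s ⊆ W →
      (∏ j ∈ s, e j) ≡ (∏ j ∈ s, p * y j) [MOD z * q] := by
    intro s hs
    induction s using Finset.induction_on with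
    | empty => rfl
    | @insert a t hx ih =>
      rw [Finset.prod_insert hx, Finset.prod_insert hx]
      have ha : a ∈ W := hs (Finset.mem_insert_self a t)
      have hea : e a ≡ p * y a [MOD z * q] := by
        rw [he a ha]
        show (p * y a + z * q * k a) % (z * q) = (p * y a) % (z * q)
        rw [Nat.add_mul_mod_self_left]
      exact Nat.ModEq.mul hea (ih (fun x hx' => hs (Finset.mem_insert_of_mem hx')))
  have h1 := key (W.erase i) (Finset.erase_subset i W)
  have h2 : y i * (p * ∏ j ∈ W.erase i, e j) ≡
      y i * (p * ∏ j ∈ W.erase i, p * y j) [MOD p * (z * q)] :=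
    (Nat.ModEq.mul_left' (c := p) h1).mul_left (y i)
  have hmod : p * y i * ∏ j ∈ W.erase i, e j ≡
      p ^ W.card * ∏ j ∈ W, y j [MOD p * z * q] := by
    have hrw : p * y i * ∏ j ∈ W.erase i, p * y j = p ^ W.card * ∏ j ∈ W, y j := by
      calc p * y i * ∏ j ∈ W.erase i, p * y j
          = ∏ j ∈ W, p * y j := Finset.mul_prod_erase W (fun j => p * y j) hi
        _ = p ^ W.card * ∏ j ∈ W, y j := by
            rw [Finset.prod_mul_distrib, Finset.prod_const]
    calc p * y i * ∏ j ∈ W.erase i, e j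
        = y i * (p * ∏ j ∈ W.erase i, e j) := by ring
      _ ≡ y i * (p * ∏ j ∈ W.erase i, p * y j) [MOD p * z * q] := by
          rw [mul_assoc]; exact h2
      _ = p * y i * ∏ j ∈ W.erase i, p * y j := by ring
      _ = p ^ W.card * ∏ j ∈ W, y j := hrw
  rw [hd i hi, ← pow_mul]
  exact pow_eq_pow_iff_modEq.mpr (hmod.of_dvd hord)
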